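/- arXiv:1604.02311 — 6 statements merged into one kernel-verified Lean document; each statement's English description precedes it below -/
import Mathlib

section
/- Let T be a Y(2|1) T-family in A, let ℓ ≥ 1, and let v, u₁, …, u_ℓ ∈ ℂ be such that the list (v, u₁, …, u_ℓ) is admissible. Then T₁₂(v)·𝕋₁₃(ū) = f(ū,v)·𝕋₁₃(ū)·T₁₂(v) + Σ_{k=1}^{ℓ} g(v,uₖ)·g(ūₖ,uₖ)·T₁₃(v)·𝕋₁₃(ūₖ)·T₁₂(uₖ), where ūₖ denotes ū with uₖ removed, f(ū,v) = ∏ⱼ f(uⱼ,v) and g(ūₖ,uₖ) = ∏_{j≠k} g(uⱼ,uₖ). -/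
open scoped BigOperators
open MulOpposite

noncomputable section

namespace Bethe

variable {A : Type*} [Ring A] [Algebra ℂ A]

/-- `g(u,v) = c/(u-v)` -/
def gg (c u v : ℂ) : ℂ := c / (u - v)

/-- `f(u,v) = (u-v+c)/(u-v)` -/
def ff (c u v : ℂ) : ℂ := (u - v + c) / (u - v)

/-- `h(u,v) = (u-v+c)/c` -/
def hh (c u v : ℂ) : ℂ := (u - v + c) / c

/-- A list of parameters is admissible if its entries are pairwise distinct and
`x - y + c ≠ 0` for any two distinct entries `x`, `y`. -/
def Admissible (c : ℂ) (l : List ℂ) : Prop :=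
  l.Pairwise fun x y => x ≠ y ∧ x - y + c ≠ 0 ∧ y - x + c ≠ 0

/-- `∏_{x ∈ xs} ∏_{y ∈ ys} f(x,y)` -/
def prodFF (c : ℂ) (xs ys : List ℂ) : ℂ :=
  (xs.map fun x => (ys.map fun y => ff c x y).prod).prod

/-- `∏_{x ∈ xs} ∏_{y ∈ ys} g(x,y)` -/
def prodGG (c : ℂ) (xs ys : List ℂ) : ℂ :=
  (xs.map fun x => (ys.map fun y => gg c x y).prod).prod

/-- `∏_{x ∈ xs} ∏_{y ∈ ys} h(x,y)` -/
def prodHH (c : ℂ) (xs ys : List ℂ) : ℂ :=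
  (xs.map fun x => (ys.map fun y => hh c x y).prod).prod

/-- `H(w̄) = ∏_{j>k} h(wⱼ,wₖ)` -/
def Hnorm (c : ℂ) : List ℂ → ℂ
  | [] => 1
  | x :: xs => ((xs.map fun y => hh c y x).prod) * Hnorm c xs

/-- `H(w̄*) = ∏_{j<k} h(wⱼ,wₖ)` -/
def HnormRev (c : ℂ) : List ℂ → ℂ
  | [] => 1
  | x :: xs => ((xs.map fun y => hh c x y).prod) * HnormRev c xs

/-- product of `h` over ordered pairs of distinct positions of a list -/
def prodHHne (c : ℂ) (xs : List ℂ) : ℂ :=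
  ∏ j : Fin xs.length, ∏ k : Fin xs.length,
    if j ≠ k then hh c (xs.get j) (xs.get k) else 1

/-- ordered product `T(w₁)⋯T(wₙ)` -/
def Tprod (Tij : ℂ → A) (l : List ℂ) : A := (l.map Tij).prod

/-- normalized ordered product `H(w̄)⁻¹ T(w₁)⋯T(wₙ)` -/
def TT (c : ℂ) (Tij : ℂ → A) (l : List ℂ) : A := (Hnorm c l)⁻¹ • Tprod Tij l

/-- normalized ordered product `H(w̄*)⁻¹ T(w₁)⋯T(wₙ)` -/
def TTrev (c : ℂ) (Tij : ℂ → A) (l : List ℂ) : A := (HnormRev c l)⁻¹ • Tprod Tij l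

/-- The defining (RTT) commutation relations of a super-Yangian `T`-family with
`ℤ₂`-grading `p`. -/
def IsTFam (c : ℂ) {N : ℕ} (p : Fin N → ℕ) (T : Fin N → Fin N → ℂ → A) : Prop :=
  ∀ i j k l : Fin N, ∀ z w : ℂ, z ≠ w →
    T i j z * T k l w - ((-1 : ℂ) ^ ((p i + p j) * (p k + p l))) • (T k l w * T i j z)
      = ((-1 : ℂ) ^ (p l * (p i + p j) + p i * p j) * gg c z w) •
          (T i l z * T k j w - T i l w * T k j z)

/-- the distinguished grading of `gl(2|1)`: `[1]=[2]=0`, `[3]=1` -/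
def p21 : Fin 3 → ℕ := ![0, 0, 1]

/-- the distinguished grading of `gl(1|2)`: `[1]=0`, `[2]=[3]=1` -/
def p12 : Fin 3 → ℕ := ![0, 1, 1]

/-- the sublist of `l` given by the positions in `S`, in the inherited order -/
def sel (l : List ℂ) (S : Finset (Fin l.length)) : List ℂ :=
  (S.sort (· ≤ ·)).map l.get

/-- `λ(w̄) = ∏ⱼ λ(wⱼ)` -/
def lamP (lam2 : ℂ → ℂ) (l : List ℂ) : ℂ := (l.map lam2).prod

/-- The Izergin kernel `K_ℓ(v̄|ū)`. -/
def Kiz (c : ℂ) {ℓ : ℕ} (vs us : Fin ℓ → ℂ) : ℂ :=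
  (∏ j : Fin ℓ, ∏ k : Fin ℓ, if (k : ℕ) < (j : ℕ) then gg c (vs j) (vs k) else 1) *
    (∏ j : Fin ℓ, ∏ k : Fin ℓ, if (k : ℕ) < (j : ℕ) then gg c (us k) (us j) else 1) *
    (∏ j : Fin ℓ, ∏ k : Fin ℓ, hh c (vs j) (us k)) *
    Matrix.det (Matrix.of fun j k => gg c (vs j) (us k) / hh c (vs j) (us k))

/-- The Izergin kernel for lists of equal length (and junk value `0` otherwise). -/
def KizL (c : ℂ) (vs us : List ℂ) : ℂ :=
  if h : vs.length = us.length then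
    Kiz c vs.get fun j => us.get (Fin.cast h j)
  else 0

/-- The operator `X_{a,b}(ū,v̄)` of the paper (`Y(2|1)` case). -/
def X (c : ℂ) (T : Fin 3 → Fin 3 → ℂ → A) (u v : List ℂ) : A :=
  ∑ S : Finset (Fin u.length), ∑ Q : Finset (Fin v.length),
    if S.card = Q.card then
      (prodGG c (sel v Q) (sel u S) * prodFF c (sel u S) (sel u Sᶜ) *
          prodGG c (sel v Qᶜ) (sel v Q) * prodHHne c (sel u S)) •
        (TT c (T 0 2) (sel u S) * Tprod (T 0 1) (sel u Sᶜ) *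
          TT c (T 1 2) (sel v Qᶜ) * Tprod (T 1 1) (sel v Q))
    else 0

/-- The operator `Y_{a,b}(ū,v̄)` of the paper (`Y(2|1)` case). -/
def Y (c : ℂ) (T : Fin 3 → Fin 3 → ℂ → A) (u v : List ℂ) : A :=
  ∑ S : Finset (Fin u.length), ∑ Q : Finset (Fin v.length),
    if S.card = Q.card then
      (KizL c (sel v Q) (sel u S) * prodFF c (sel u S) (sel u Sᶜ) *
          prodGG c (sel v Qᶜ) (sel v Q)) •
        (TT c (T 0 2) (sel v Q) * TT c (T 1 2) (sel v Qᶜ) *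
          Tprod (T 0 1) (sel u Sᶜ) * Tprod (T 1 1) (sel u S))
    else 0

/-- First explicit expression for the `Y(2|1)` Bethe vector (operator part,
the weights `λ₂` included as scalars). -/
def PhiA (c : ℂ) (T : Fin 3 → Fin 3 → ℂ → A) (lam2 : ℂ → ℂ) (u v : List ℂ) : A :=
  ∑ S : Finset (Fin u.length), ∑ Q : Finset (Fin v.length),
    if S.card = Q.card then
      (prodGG c (sel v Q) (sel u S) * prodFF c (sel u S) (sel u Sᶜ) *
          prodGG c (sel v Qᶜ) (sel v Q) * prodHHne c (sel u S) * lamP lam2 (sel v Q)) •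
        (TT c (T 0 2) (sel u S) * Tprod (T 0 1) (sel u Sᶜ) * TT c (T 1 2) (sel v Qᶜ))
    else 0

/-- Second explicit expression for the `Y(2|1)` Bethe vector (operator part). -/
def PhiB (c : ℂ) (T : Fin 3 → Fin 3 → ℂ → A) (lam2 : ℂ → ℂ) (u v : List ℂ) : A :=
  ∑ S : Finset (Fin u.length), ∑ Q : Finset (Fin v.length),
    if S.card = Q.card then
      (KizL c (sel v Q) (sel u S) * prodFF c (sel u S) (sel u Sᶜ) *
          prodGG c (sel v Qᶜ) (sel v Q) * lamP lam2 (sel u S)) •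
        (TT c (T 0 2) (sel v Q) * TT c (T 1 2) (sel v Qᶜ) * Tprod (T 0 1) (sel u Sᶜ))
    else 0

/-- First explicit expression for the `Y(1|2)` Bethe vector, without the overall
sign `(-1)^b` (operator part). -/
def PhiTA (c : ℂ) (T : Fin 3 → Fin 3 → ℂ → A) (lam2 : ℂ → ℂ) (u v : List ℂ) : A :=
  ∑ S : Finset (Fin u.length), ∑ Q : Finset (Fin v.length),
    if S.card = Q.card then
      (prodGG c (sel u S) (sel v Q) * prodFF c (sel v Q) (sel v Qᶜ) *
          prodGG c (sel u Sᶜ) (sel u S) * prodHHne c (sel v Q) * lamP lam2 (sel u S)) •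
        (TT c (T 0 2) (sel v Q) * Tprod (T 1 2) (sel v Qᶜ) * TT c (T 0 1) (sel u Sᶜ))
    else 0

/-- Second explicit expression for the `Y(1|2)` Bethe vector, without the overall
sign `(-1)^b` (operator part). -/
def PhiTB (c : ℂ) (T : Fin 3 → Fin 3 → ℂ → A) (lam2 : ℂ → ℂ) (u v : List ℂ) : A :=
  ∑ S : Finset (Fin u.length), ∑ Q : Finset (Fin v.length),
    if S.card = Q.card then
      (KizL c (sel u S) (sel v Q) * prodFF c (sel v Q) (sel v Qᶜ) *
          prodGG c (sel u Sᶜ) (sel u S) * lamP lam2 (sel v Q)) •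
        (TT c (T 0 2) (sel u S) * TT c (T 0 1) (sel u Sᶜ) * Tprod (T 1 2) (sel v Qᶜ))
    else 0

/-- First explicit expression for the dual `Y(2|1)` Bethe vector, without the
overall sign `(-1)^{b(b-1)/2}`.  `E` is a right `A`-module, i.e. a left
`Aᵐᵒᵖ`-module; `op X • Ωd` is `Ωd · X`. -/
def PsiA {E : Type*} [AddCommGroup E] [Module ℂ E] [Module Aᵐᵒᵖ E]
    (c : ℂ) (T : Fin 3 → Fin 3 → ℂ → A) (lam2 : ℂ → ℂ) (u v : List ℂ) (Ωd : E) : E :=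
  ∑ S : Finset (Fin u.length), ∑ Q : Finset (Fin v.length),
    if S.card = Q.card then
      (prodGG c (sel v Q) (sel u S) * prodFF c (sel u S) (sel u Sᶜ) *
          prodGG c (sel v Qᶜ) (sel v Q) * prodHHne c (sel u S) * lamP lam2 (sel v Q)) •
        (op (TTrev c (T 2 1) (sel v Qᶜ) * Tprod (T 1 0) (sel u Sᶜ) *
              TTrev c (T 2 0) (sel u S)) • Ωd)
    else 0

/-- The dual `Y(2|1)` Bethe vector `Ψ_{a,b}(ū,v̄)`. -/
def Psi {E : Type*} [AddCommGroup E] [Module ℂ E] [Module Aᵐᵒᵖ E]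
    (c : ℂ) (T : Fin 3 → Fin 3 → ℂ → A) (lam2 : ℂ → ℂ) (u v : List ℂ) (Ωd : E) : E :=
  ((-1 : ℂ) ^ (v.length * (v.length - 1) / 2)) • PsiA c T lam2 u v Ωd

/-- Second explicit expression for the dual `Y(2|1)` Bethe vector, without the
overall sign `(-1)^{b(b-1)/2}`. -/
def PsiB {E : Type*} [AddCommGroup E] [Module ℂ E] [Module Aᵐᵒᵖ E]
    (c : ℂ) (T : Fin 3 → Fin 3 → ℂ → A) (lam2 : ℂ → ℂ) (u v : List ℂ) (Ωd : E) : E :=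
  ∑ S : Finset (Fin u.length), ∑ Q : Finset (Fin v.length),
    if S.card = Q.card then
      (KizL c (sel v Q) (sel u S) * prodFF c (sel u S) (sel u Sᶜ) *
          prodGG c (sel v Qᶜ) (sel v Q) * lamP lam2 (sel u S)) •
        (op (Tprod (T 1 0) (sel u Sᶜ) * TTrev c (T 2 1) (sel v Qᶜ) *
              TTrev c (T 2 0) (sel v Q)) • Ωd)
    else 0

-- auxiliary lemmas
lemma hh_ne_zero {c y x : ℂ} (hc : c ≠ 0) (h : y - x + c ≠ 0) : hh c y x ≠ 0 :=
  div_ne_zero h hc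

lemma ff_eq_gg_mul_hh {c : ℂ} (hc : c ≠ 0) (a b : ℂ) : ff c a b = gg c a b * hh c a b := by
  unfold ff gg hh
  rcases eq_or_ne (a - b) 0 with h | h
  · simp [h]
  · field_simp

lemma key' {c v x w : ℂ} (hc : c ≠ 0) (hvx : v ≠ x) (hvw : v ≠ w) (hxw : x ≠ w)
    (hwx : w - x + c ≠ 0) :
    (hh c w x)⁻¹ * (gg c v x * gg c x w - ff c v x * gg c v w) = gg c v w * gg c x w := by
  unfold ff gg hh
  have h1 : v - x ≠ 0 := sub_ne_zero.mpr hvx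
  have h2 : v - w ≠ 0 := sub_ne_zero.mpr hvw
  have h3 : x - w ≠ 0 := sub_ne_zero.mpr hxw
  field_simp
  ring

lemma rel1 {c : ℂ} {T : Fin 3 → Fin 3 → ℂ → A} (hT : IsTFam c p21 T) (z w : ℂ) (hzw : z ≠ w) :
    T 0 1 z * T 0 2 w = ff c w z • (T 0 2 w * T 0 1 z) + gg c z w • (T 0 2 z * T 0 1 w) := by
  have h := hT 0 1 0 2 z w hzw
  simp [p21] at h
  have hs : ff c w z = 1 - gg c z w := by
    unfold ff gg
    have h1 : w - z ≠ 0 := sub_ne_zero.mpr hzw.symm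
    have h2 : z - w ≠ 0 := sub_ne_zero.mpr hzw
    field_simp
    ring
  rw [hs]
  linear_combination (norm := module) h

lemma rel2 {c : ℂ} {T : Fin 3 → Fin 3 → ℂ → A} (hT : IsTFam c p21 T) (z w : ℂ) (hzw : z ≠ w) :
    ff c z w • (T 0 2 z * T 0 2 w) = (-ff c w z) • (T 0 2 w * T 0 2 z) := by
  have h := hT 0 2 0 2 z w hzw
  simp [p21] at h
  have hs1 : ff c z w = 1 + gg c z w := by
    unfold ff gg
    have h1 : z - w ≠ 0 := sub_ne_zero.mpr hzw
    field_simp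
  have hs2 : -ff c w z = gg c z w - 1 := by
    unfold ff gg
    have h1 : w - z ≠ 0 := sub_ne_zero.mpr hzw.symm
    have h2 : z - w ≠ 0 := sub_ne_zero.mpr hzw
    field_simp
    ring
  rw [hs1, hs2]
  linear_combination (norm := module) h

lemma TT_cons (c : ℂ) (Tc : ℂ → A) (x : ℂ) (us : List ℂ) :
    TT c Tc (x :: us) = ((us.map fun y => hh c y x).prod)⁻¹ • (Tc x * TT c Tc us) := by
  simp only [TT, Hnorm, Tprod, List.map_cons, List.prod_cons, mul_inv, mul_smul, mul_smul_comm]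

lemma prod_map_eraseIdx (f : ℂ → ℂ) :
    ∀ (l : List ℂ) (j : ℕ) (hj : j < l.length),
      (l.map f).prod = f (l[j]'hj) * ((l.eraseIdx j).map f).prod := by
  intro l
  induction l with
  | nil => intro j hj; simp at hj
  | cons a l ih =>
    intro j hj
    cases j with
    | zero => simp
    | succ j =>
      have hj' : j < l.length := by simpa using hj
      simp only [List.getElem_cons_succ, List.eraseIdx_cons_succ, List.map_cons, List.prod_cons,
        ih j hj']
      ring


lemma swapTT {c : ℂ} {T : Fin 3 → Fin 3 → ℂ → A} (hT : IsTFam c p21 T) {v x : ℂ} (hvx : v ≠ x)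
    (R : A) :
    ff c x v • (T 0 2 x * (T 0 2 v * R)) = (-ff c v x) • (T 0 2 v * (T 0 2 x * R)) := by
  calc ff c x v • (T 0 2 x * (T 0 2 v * R)) = (ff c x v • (T 0 2 x * T 0 2 v)) * R := by
        rw [smul_mul_assoc, mul_assoc]
    _ = ((-ff c v x) • (T 0 2 v * T 0 2 x)) * R := by rw [rel2 hT x v hvx.symm]
    _ = (-ff c v x) • (T 0 2 v * (T 0 2 x * R)) := by rw [smul_mul_assoc, mul_assoc]

lemma main {c : ℂ} (hc : c ≠ 0) {T : Fin 3 → Fin 3 → ℂ → A} (hT : IsTFam c p21 T) :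
    ∀ (u : List ℂ) (v : ℂ), Admissible c (v :: u) →
    T 0 1 v * TT c (T 0 2) u
      = ((u.map fun y => ff c y v).prod) • (TT c (T 0 2) u * T 0 1 v)
        + ∑ k : Fin u.length,
            (gg c v (u.get k) *
                ((u.eraseIdx (k : ℕ)).map fun y => gg c y (u.get k)).prod) •
              (T 0 2 v * TT c (T 0 2) (u.eraseIdx (k : ℕ)) * T 0 1 (u.get k)) := by
  intro u
  induction u with
  | nil =>
    intro v _
    simp [TT, Hnorm, Tprod]
  | cons x us ih =>
    intro v hadm
    obtain ⟨hv, hadm'⟩ := List.pairwise_cons.mp hadm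
    obtain ⟨hx, hus⟩ := List.pairwise_cons.mp hadm'
    have hadm_vus : Admissible c (v :: us) :=
      List.pairwise_cons.mpr ⟨fun b hb => hv b (List.mem_cons_of_mem _ hb), hus⟩
    have hvx : v ≠ x := (hv x List.mem_cons_self).1
    have IHv := ih v hadm_vus
    have IHx := ih x hadm'
    have hPx : ((us.map fun y => hh c y x).prod) ≠ 0 := by
      refine List.prod_ne_zero ?_
      simp only [List.mem_map]
      rintro ⟨y, hy, hy0⟩
      exact hh_ne_zero hc ((hx y hy).2.2) hy0
    rw [TT_cons, mul_smul_comm, ← mul_assoc, rel1 hT v x hvx, add_mul, smul_mul_assoc,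
      smul_mul_assoc, mul_assoc, mul_assoc, IHv, IHx]
    simp only [List.get_eq_getElem, List.length_cons, Fin.sum_univ_succ, Fin.val_zero,
      Fin.val_succ, List.getElem_cons_zero, List.getElem_cons_succ, List.eraseIdx_cons_zero,
      List.eraseIdx_cons_succ, List.map_cons, List.prod_cons, TT_cons, mul_add, smul_add,
      Finset.mul_sum, Finset.smul_sum, mul_smul_comm, smul_mul_assoc, smul_smul, mul_assoc]
    have hFx : (List.map (fun y => ff c y x) us).prod
        = (List.map (fun y => gg c y x) us).prod * (List.map (fun y => hh c y x) us).prod := by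
      simp only [ff_eq_gg_mul_hh hc]
      rw [List.prod_map_mul]
    have h1 : ((List.map (fun y => hh c y x) us).prod⁻¹ *
          (ff c x v * (List.map (fun y => ff c y v) us).prod))
        = ff c x v * ((List.map (fun y => ff c y v) us).prod *
            (List.map (fun y => hh c y x) us).prod⁻¹) := by ring
    have h2 : ((List.map (fun y => hh c y x) us).prod⁻¹ *
          (gg c v x * (List.map (fun y => ff c y x) us).prod))
        = gg c v x * (List.map (fun y => gg c y x) us).prod := by
      rw [hFx]
      field_simp
    have hsum :
        (∑ j : Fin us.length,
            ((List.map (fun y => hh c y x) us).prod⁻¹ *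
                (ff c x v * (gg c v (us[(j : ℕ)]'j.isLt) *
                  (List.map (fun y => gg c y (us[(j : ℕ)]'j.isLt)) (us.eraseIdx (j : ℕ))).prod))) •
              (T 0 2 x * (T 0 2 v * (TT c (T 0 2) (us.eraseIdx (j : ℕ)) * T 0 1 (us[(j : ℕ)]'j.isLt)))))
          + ∑ j : Fin us.length,
            ((List.map (fun y => hh c y x) us).prod⁻¹ *
                (gg c v x * (gg c x (us[(j : ℕ)]'j.isLt) *
                  (List.map (fun y => gg c y (us[(j : ℕ)]'j.isLt)) (us.eraseIdx (j : ℕ))).prod))) •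
              (T 0 2 v * (T 0 2 x * (TT c (T 0 2) (us.eraseIdx (j : ℕ)) * T 0 1 (us[(j : ℕ)]'j.isLt))))
          = ∑ j : Fin us.length,
            (gg c v (us[(j : ℕ)]'j.isLt) * (gg c x (us[(j : ℕ)]'j.isLt) *
                ((List.map (fun y => gg c y (us[(j : ℕ)]'j.isLt)) (us.eraseIdx (j : ℕ))).prod *
                  (List.map (fun y => hh c y x) (us.eraseIdx (j : ℕ))).prod⁻¹))) •
              (T 0 2 v * (T 0 2 x * (TT c (T 0 2) (us.eraseIdx (j : ℕ)) * T 0 1 (us[(j : ℕ)]'j.isLt)))) := by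
      rw [← Finset.sum_add_distrib]
      refine Finset.sum_congr rfl fun j _ => ?_
      have hw : us[(j : ℕ)]'j.isLt ∈ us := List.getElem_mem _
      obtain ⟨hxw, hxwc, hwxc⟩ := hx _ hw
      have hvw : v ≠ us[(j : ℕ)]'j.isLt := (hv _ (List.mem_cons_of_mem _ hw)).1
      have hsplit : (List.map (fun y => hh c y x) us).prod
          = hh c (us[(j : ℕ)]'j.isLt) x *
              ((List.map (fun y => hh c y x) (us.eraseIdx (j : ℕ))).prod) :=
        prod_map_eraseIdx _ us j j.isLt
      rw [show ((List.map (fun y => hh c y x) us).prod⁻¹ *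
            (ff c x v * (gg c v (us[(j : ℕ)]'j.isLt) *
              (List.map (fun y => gg c y (us[(j : ℕ)]'j.isLt)) (us.eraseIdx (j : ℕ))).prod)))
          = ((List.map (fun y => hh c y x) us).prod⁻¹ *
              (gg c v (us[(j : ℕ)]'j.isLt) *
                (List.map (fun y => gg c y (us[(j : ℕ)]'j.isLt)) (us.eraseIdx (j : ℕ))).prod)) *
              ff c x v
          from by ring,
        mul_smul, swapTT hT hvx, smul_smul, ← add_smul]
      congr 1
      rw [hsplit, mul_inv]
      linear_combination
        (((List.map (fun y => hh c y x) (us.eraseIdx (j : ℕ))).prod)⁻¹ *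
            (List.map (fun y => gg c y (us[(j : ℕ)]'j.isLt)) (us.eraseIdx (j : ℕ))).prod) *
          key' hc hvx hvw hxw hwxc
    rw [h1, h2]
    conv_rhs => rw [← hsum]
    abel

/-- multiple commutation relation of `T₁₂` with `𝕋₁₃(ū)` in `Y(2|1)`. -/
theorem statement0 (c : ℂ) (hc : c ≠ 0) (T : Fin 3 → Fin 3 → ℂ → A)
    (hT : IsTFam c p21 T) (v : ℂ) (u : List ℂ) (hlen : 1 ≤ u.length)
    (hadm : Admissible c (v :: u)) :
    T 0 1 v * TT c (T 0 2) u
      = ((u.map fun x => ff c x v).prod) • (TT c (T 0 2) u * T 0 1 v)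
        + ∑ k : Fin u.length,
            (gg c v (u.get k) *
                ((u.eraseIdx (k : ℕ)).map fun x => gg c x (u.get k)).prod) •
              (T 0 2 v * TT c (T 0 2) (u.eraseIdx (k : ℕ)) * T 0 1 (u.get k)) := by
  exact main hc hT u v hadm

end Bethe
end
end

section
/- Let T be a Y(2|1) T-family in A and let ū = (u₁,…,u_ℓ) be an admissible list. Then for every permutation σ of {1,…,ℓ} one has 𝕋₁₃(u_{σ(1)},…,u_{σ(ℓ)}) = 𝕋₁₃(u₁,…,u_ℓ) and 𝕋₂₃(u_{σ(1)},…,u_{σ(ℓ)}) = 𝕋₂₃(u₁,…,u_ℓ); that is, the normalized ordered products 𝕋₁₃ and 𝕋₂₃ are symmetric functions of their arguments. -/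
open scoped BigOperators
open MulOpposite

noncomputable section

namespace Bethe

variable {A : Type*} [Ring A] [Algebra ℂ A]

lemma hh_ne {c z w : ℂ} (hc : c ≠ 0) (h : z - w + c ≠ 0) : hh c z w ≠ 0 :=
  div_ne_zero h hc

lemma Hnorm_ne {c : ℂ} (hc : c ≠ 0) : ∀ {l : List ℂ}, Admissible c l → Hnorm c l ≠ 0
  | [], _ => one_ne_zero
  | x :: xs, had => by
    have h1 := (List.pairwise_cons.1 had).1
    have h2 := (List.pairwise_cons.1 had).2
    refine mul_ne_zero (List.prod_ne_zero ?_) (Hnorm_ne hc h2)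
    intro hmem
    rcases List.mem_map.1 hmem with ⟨y, hy, hyx⟩
    exact hh_ne hc (h1 y hy).2.2 hyx

lemma inv_smul_eq_inv_smul {a b : ℂ} (ha : a ≠ 0) (hb : b ≠ 0) {X Y : A}
    (h : b • X = a • Y) : a⁻¹ • X = b⁻¹ • Y := by
  have hX : X = b⁻¹ • (a • Y) := by rw [← h, inv_smul_smul₀ hb]
  rw [hX, smul_comm a⁻¹ b⁻¹, inv_smul_smul₀ ha]

lemma TT_perm (c : ℂ) (hc : c ≠ 0) (Tf : ℂ → A)
    (hrel : ∀ z w : ℂ, z ≠ w → z - w + c ≠ 0 → w - z + c ≠ 0 →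
      hh c z w • (Tf z * Tf w) = hh c w z • (Tf w * Tf z)) :
    ∀ {l₁ l₂ : List ℂ}, l₁.Perm l₂ → Admissible c l₁ → TT c Tf l₁ = TT c Tf l₂ := by
  intro l₁ l₂ hp
  induction hp with
  | nil => intro _; rfl
  | cons x h ih =>
    intro had
    have had' := (List.pairwise_cons.1 had).2
    have hA := (h.map (fun y => hh c y x)).prod_eq
    have h1 := ih had'
    simp only [TT, Tprod] at h1
    simp only [TT, Tprod, Hnorm, List.map_cons, List.prod_cons]
    rw [mul_inv, mul_inv, mul_smul, mul_smul, hA]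
    congr 1
    rw [← mul_smul_comm, ← mul_smul_comm, h1]
  | swap x y t =>
    intro had
    have hxy := (List.pairwise_cons.1 had).1 x List.mem_cons_self
    have hadt : Admissible c t :=
      ((List.pairwise_cons.1 (List.pairwise_cons.1 had).2).2)
    have hty := fun z hz => (List.pairwise_cons.1 had).1 z (List.mem_cons_of_mem _ hz)
    have htx := fun z hz => (List.pairwise_cons.1 (List.pairwise_cons.1 had).2).1 z hz
    have hPyne : (t.map fun z => hh c z y).prod ≠ 0 := List.prod_ne_zero (by
      intro hmem; rcases List.mem_map.1 hmem with ⟨z, hz, hzz⟩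
      exact hh_ne hc (hty z hz).2.2 hzz)
    have hPxne : (t.map fun z => hh c z x).prod ≠ 0 := List.prod_ne_zero (by
      intro hmem; rcases List.mem_map.1 hmem with ⟨z, hz, hzz⟩
      exact hh_ne hc (htx z hz).2.2 hzz)
    have hHne := Hnorm_ne hc hadt
    simp only [TT, Tprod, Hnorm, List.map_cons, List.prod_cons]
    set Py := (t.map fun z => hh c z y).prod with hPy
    set Px := (t.map fun z => hh c z x).prod with hPx
    set P := (t.map Tf).prod with hP
    have key : hh c x y • (Tf x * Tf y * P) = hh c y x • (Tf y * Tf x * P) :=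
      calc hh c x y • (Tf x * Tf y * P) = (hh c x y • (Tf x * Tf y)) * P :=
            (smul_mul_assoc _ _ _).symm
        _ = (hh c y x • (Tf y * Tf x)) * P := by
            rw [hrel x y (fun e => hxy.1 e.symm) hxy.2.2 hxy.2.1]
        _ = hh c y x • (Tf y * Tf x * P) := smul_mul_assoc _ _ _
    refine inv_smul_eq_inv_smul
      (mul_ne_zero (mul_ne_zero (hh_ne hc hxy.2.2) hPyne) (mul_ne_zero hPxne hHne))
      (mul_ne_zero (mul_ne_zero (hh_ne hc hxy.2.1) hPxne) (mul_ne_zero hPyne hHne)) ?_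
    rw [show hh c y x * Px * (Py * Hnorm c t) = Px * Py * Hnorm c t * hh c y x from by ring,
      show hh c x y * Py * (Px * Hnorm c t) = Px * Py * Hnorm c t * hh c x y from by ring,
      mul_smul, mul_smul, ← mul_assoc, ← mul_assoc, ← key, smul_smul, smul_smul]
  | trans h₁ h₂ ih₁ ih₂ =>
    intro had
    have had₂ := (h₁.pairwise_iff
      (fun hab => ⟨fun e => hab.1 e.symm, hab.2.2, hab.2.1⟩)).1 had
    exact (ih₁ had).trans (ih₂ had₂)

lemma hrel_of (c : ℂ) (hc : c ≠ 0) (T : Fin 3 → Fin 3 → ℂ → A) (hT : IsTFam c p21 T)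
    (i : Fin 3) (hi : p21 i = 0) :
    ∀ z w : ℂ, z ≠ w → z - w + c ≠ 0 → w - z + c ≠ 0 →
      hh c z w • (T i 2 z * T i 2 w) = hh c w z • (T i 2 w * T i 2 z) := by
  intro z w hzw h1 h2
  have h := hT i 2 i 2 z w hzw
  rw [hi, show p21 2 = 1 from rfl] at h
  norm_num at h
  have hzw' : (z - w) ≠ 0 := sub_ne_zero.2 hzw
  have hg : (1 + gg c z w) • (T i 2 z * T i 2 w)
      = (gg c z w - 1) • (T i 2 w * T i 2 z) := by
    linear_combination (norm := module) h
  have e1 : hh c z w = ((z - w) / c) * (1 + gg c z w) := by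
    unfold hh gg; field_simp
  have e2 : hh c w z = ((z - w) / c) * (gg c z w - 1) := by
    unfold hh gg; field_simp; ring
  rw [e1, e2, mul_smul, mul_smul, hg]

/-- the normalized ordered products `𝕋₁₃` and `𝕋₂₃` are symmetric in
their arguments. -/
theorem statement2 (c : ℂ) (hc : c ≠ 0) (T : Fin 3 → Fin 3 → ℂ → A)
    (hT : IsTFam c p21 T) (u : List ℂ) (hadm : Admissible c u)
    (σ : Equiv.Perm (Fin u.length)) :
    TT c (T 0 2) (List.ofFn fun i => u.get (σ i)) = TT c (T 0 2) u ∧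
      TT c (T 1 2) (List.ofFn fun i => u.get (σ i)) = TT c (T 1 2) u := by
  have hperm : (List.ofFn fun i => u.get (σ i)).Perm u := by
    have h := σ.ofFn_comp_perm u.get
    simpa [Function.comp_def, List.ofFn_get] using h
  have hadm' : Admissible c (List.ofFn fun i => u.get (σ i)) :=
    (hperm.pairwise_iff (fun hab => ⟨fun e => hab.1 e.symm, hab.2.2, hab.2.1⟩)).2 hadm
  exact ⟨TT_perm c hc (T 0 2) (hrel_of c hc T hT 0 rfl) hperm hadm',
    TT_perm c hc (T 1 2) (hrel_of c hc T hT 1 rfl) hperm hadm'⟩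


end Bethe
end
end

section
/- Let m, n ≥ 0 with N = m + n ≥ 1. Define the grading [i] = 0 for 1 ≤ i ≤ m and [i] = 1 for m < i ≤ N, the tilde grading [i]′ = 0 for 1 ≤ i ≤ n and [i]′ = 1 for n < i ≤ N, and write ī = N + 1 − i. Let A be a unital associative ℂ-algebra and let T_{ij} : ℂ → A (1 ≤ i,j ≤ N) satisfy, for all z ≠ w in ℂ: T_{ij}(z)T_{kl}(w) − (−1)^{([i]+[j])([k]+[l])} T_{kl}(w)T_{ij}(z) = (−1)^{[l]([i]+[j])+[i][j]} g(z,w) (T_{il}(z)T_{kj}(w) − T_{il}(w)T_{kj}(z)). Define S_{ij}(z) = (−1)^{[ī][j̄] + [ī] + 1} · T_{j̄ ī}(z). Then: (i) the family S satisfies the same relations with the grading [·] replaced by [·]′, i.e. for all i,j,k,l and z ≠ w, S_{ij}(z)S_{kl}(w) − (−1)^{([i]′+[j]′)([k]′+[l]′)} S_{kl}(w)S_{ij}(z) = (−1)^{[l]′([i]′+[j]′)+[i]′[j]′} g(z,w) (S_{il}(z)S_{kj}(w) − S_{il}(w)S_{kj}(z)); and (ii) the supertrace is preserved: Σ_{i=1}^{N}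 (−1)^{[i]′} S_{ii}(z) = Σ_{i=1}^{N} (−1)^{[i]} T_{ii}(z) for all z. -/
open scoped BigOperators
open MulOpposite

noncomputable section

namespace Bethe

variable {A : Type*} [Ring A] [Algebra ℂ A]

/-- the map `φ : T_{ij}(u) ↦ (−1)^{[ī][j̄]+[ī]+1} T_{j̄ī}(u)` sends the
`gl(m|n)` RTT relations to the `gl(n|m)` ones and preserves the supertrace. -/
theorem statement15 (c : ℂ) (hc : c ≠ 0) (m n : ℕ) (hN : 1 ≤ m + n)
    (T : Fin (m + n) → Fin (m + n) → ℂ → A)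
    (p p' : Fin (m + n) → ℕ)
    (hp : ∀ i : Fin (m + n), p i = if (i : ℕ) < m then 0 else 1)
    (hp' : ∀ i : Fin (m + n), p' i = if (i : ℕ) < n then 0 else 1)
    (hT : IsTFam c p T)
    (S : Fin (m + n) → Fin (m + n) → ℂ → A)
    (hS : ∀ i j : Fin (m + n), ∀ z : ℂ,
        S i j z = ((-1 : ℂ) ^ (p i.rev * p j.rev + p i.rev + 1)) • T j.rev i.rev z) :
    IsTFam c p' S ∧
      ∀ z : ℂ,
        (∑ i : Fin (m + n), ((-1 : ℂ) ^ p' i) • S i i z)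
          = ∑ i : Fin (m + n), ((-1 : ℂ) ^ p i) • T i i z := by
  have hcase : ∀ i : Fin (m + n), (p i.rev = 0 ∧ p' i = 1) ∨ (p i.rev = 1 ∧ p' i = 0) := by
    intro i
    have h1 : (i.rev : ℕ) = m + n - (i + 1) := Fin.val_rev i
    have h2 : (i : ℕ) < m + n := i.isLt
    rw [hp, hp', h1]
    split_ifs <;> omega
  constructor
  · intro i j k l z w hzw
    have hg : gg c w z = -gg c z w := by
      unfold gg
      rw [show w - z = -(z - w) by ring, div_neg]
    have key := hT l.rev k.rev j.rev i.rev w z (Ne.symm hzw)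
    rw [hg] at key
    rw [hS i j z, hS k l w, hS i l z, hS k j w, hS i l w, hS k j z]
    simp only [smul_mul_smul_comm]
    rcases hcase i with ⟨hi, hi'⟩ | ⟨hi, hi'⟩ <;>
      rcases hcase j with ⟨hj, hj'⟩ | ⟨hj, hj'⟩ <;>
        rcases hcase k with ⟨hk, hk'⟩ | ⟨hk, hk'⟩ <;>
          rcases hcase l with ⟨hl, hl'⟩ | ⟨hl, hl'⟩ <;>
            simp only [hi, hi', hj, hj', hk, hk', hl, hl'] at key ⊢ <;>
              (rw [sub_eq_iff_eq_add] at key; rw [key]; match_scalars <;> ring)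
  · intro z
    have h1 : ∀ i : Fin (m + n), ((-1 : ℂ) ^ p' i) • S i i z
        = ((-1 : ℂ) ^ p i.rev) • T i.rev i.rev z := by
      intro i
      rw [hS, smul_smul]
      congr 1
      rcases hcase i with ⟨h, h2⟩ | ⟨h, h2⟩ <;> rw [h, h2] <;> norm_num
    simp only [h1]
    exact Fintype.sum_bijective Fin.rev Fin.rev_bijective _ _ fun i => rfl

end Bethe
end
end

section
/- Let c ∈ ℂ be nonzero, let a ≥ 1, and let u₁, …, u_a, v ∈ ℂ be pairwise distinct. With g(u,v) = c/(u−v) and f(u,v) = (u−v+c)/(u−v), one has: Σ_{k=1}^{a−1} g(u_a,uₖ)·g(v,uₖ)·∏_{1≤j≤a−1, j≠k} f(uₖ,uⱼ) = g(v,u_a)·( ∏_{j=1}^{a−1} f(u_a,uⱼ) − ∏_{j=1}^{a−1} f(v,uⱼ) ). -/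
open scoped BigOperators
open MulOpposite

noncomputable section

namespace Bethe

variable {A : Type*} [Ring A] [Algebra ℂ A]

lemma key1 (c t y x : ℂ) (htx : t ≠ x) (hyx : y ≠ x) (hty : t ≠ y) :
    c / (t - x) * ff c t y = c / (t - x) * ff c x y + c / (t - y) * (c / (y - x)) := by
  have h1 : t - x ≠ 0 := sub_ne_zero.mpr htx
  have h2 : y - x ≠ 0 := sub_ne_zero.mpr hyx
  have h3 : t - y ≠ 0 := sub_ne_zero.mpr hty
  have h4 : x - y ≠ 0 := sub_ne_zero.mpr hyx.symm
  simp only [ff]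
  field_simp
  ring

/-- Partial fraction expansion of `∏ (t-xⱼ+c)/(t-xⱼ)`. -/
lemma pf (c : ℂ) : ∀ (n : ℕ) (x : Fin n → ℂ) (t : ℂ),
    (∀ i j : Fin n, i ≠ j → x i ≠ x j) → (∀ i, t ≠ x i) →
    ∏ j, ff c t (x j) =
      1 + ∑ k, c / (t - x k) * ∏ j, (if j ≠ k then ff c (x k) (x j) else 1) := by
  intro n
  induction n with
  | zero => intro x t _ _; simp
  | succ n ih =>
    intro x t hd ht
    have hd' : ∀ i j : Fin n, i ≠ j → x i.castSucc ≠ x j.castSucc := fun i j hij =>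
      hd _ _ (fun h => hij (Fin.castSucc_inj.mp h))
    have ht' : ∀ i : Fin n, t ≠ x i.castSucc := fun i => ht _
    have hy' : ∀ i : Fin n, x (Fin.last n) ≠ x i.castSucc := fun i =>
      hd _ _ (Fin.castSucc_lt_last i).ne'
    have hty : t ≠ x (Fin.last n) := ht _
    have IHt : ∏ j : Fin n, ff c t (x j.castSucc) =
        1 + ∑ k : Fin n, c / (t - x k.castSucc) *
          ∏ j : Fin n, (if j ≠ k then ff c (x k.castSucc) (x j.castSucc) else 1) :=
      ih (fun i => x i.castSucc) t hd' ht'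
    have IHy : ∏ j : Fin n, ff c (x (Fin.last n)) (x j.castSucc) =
        1 + ∑ k : Fin n, c / (x (Fin.last n) - x k.castSucc) *
          ∏ j : Fin n, (if j ≠ k then ff c (x k.castSucc) (x j.castSucc) else 1) :=
      ih (fun i => x i.castSucc) (x (Fin.last n)) hd' hy'
    have hP : ∀ k : Fin n,
        (∏ j : Fin (n + 1), if j ≠ Fin.castSucc k then ff c (x k.castSucc) (x j) else 1)
          = (∏ j : Fin n, if j ≠ k then ff c (x k.castSucc) (x j.castSucc) else 1) *
              ff c (x k.castSucc) (x (Fin.last n)) := by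
      intro k
      rw [Fin.prod_univ_castSucc]
      congr 1
      · exact Finset.prod_congr rfl fun j _ => by simp [Fin.castSucc_inj]
      · rw [if_pos (Fin.castSucc_lt_last k).ne']
    have hlast :
        (∏ j : Fin (n + 1), if j ≠ Fin.last n then ff c (x (Fin.last n)) (x j) else 1)
          = ∏ j : Fin n, ff c (x (Fin.last n)) (x j.castSucc) := by
      rw [Fin.prod_univ_castSucc, if_neg (by simp), mul_one]
      exact Finset.prod_congr rfl fun j _ => if_pos (Fin.castSucc_lt_last j).ne
    have hf : ff c t (x (Fin.last n)) = 1 + c / (t - x (Fin.last n)) := by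
      have h3 : t - x (Fin.last n) ≠ 0 := sub_ne_zero.mpr hty
      simp only [ff]
      field_simp
    rw [Fin.prod_univ_castSucc, Fin.sum_univ_castSucc]
    simp only [hP]
    rw [hlast, IHt, IHy]
    have hterm : ∀ k ∈ (Finset.univ : Finset (Fin n)),
        c / (t - x k.castSucc) *
            (∏ j : Fin n, if j ≠ k then ff c (x k.castSucc) (x j.castSucc) else 1) *
            ff c t (x (Fin.last n))
          = c / (t - x k.castSucc) *
              ((∏ j : Fin n, if j ≠ k then ff c (x k.castSucc) (x j.castSucc) else 1) *
                ff c (x k.castSucc) (x (Fin.last n)))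
            + c / (t - x (Fin.last n)) *
              (c / (x (Fin.last n) - x k.castSucc) *
                ∏ j : Fin n, if j ≠ k then ff c (x k.castSucc) (x j.castSucc) else 1) := by
      intro k _
      have h := key1 c t (x (Fin.last n)) (x k.castSucc) (ht' k) (hy' k) hty
      linear_combination
        (∏ j : Fin n, if j ≠ k then ff c (x k.castSucc) (x j.castSucc) else 1) * h
    rw [add_mul, one_mul, Finset.sum_mul, Finset.sum_congr rfl hterm,
      Finset.sum_add_distrib, ← Finset.mul_sum, hf]
    ring

lemma key2 (c w v x : ℂ) (hwx : w ≠ x) (hvx : v ≠ x) (hvw : v ≠ w) :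
    gg c w x * gg c v x = gg c v w * (c / (w - x) - c / (v - x)) := by
  have h1 : w - x ≠ 0 := sub_ne_zero.mpr hwx
  have h2 : v - x ≠ 0 := sub_ne_zero.mpr hvx
  have h3 : v - w ≠ 0 := sub_ne_zero.mpr hvw
  simp only [gg]
  field_simp
  ring

/-- summation identity obtained by contour integration. -/
theorem statement16 (c : ℂ) (hc : c ≠ 0) (n : ℕ) (u : Fin (n + 1) → ℂ) (v : ℂ)
    (hdist : ∀ i j : Fin (n + 1), i ≠ j → u i ≠ u j)
    (hv : ∀ i : Fin (n + 1), u i ≠ v) :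
    ∑ k : Fin n,
        gg c (u (Fin.last n)) (u k.castSucc) * gg c v (u k.castSucc) *
          ∏ j : Fin n, (if j ≠ k then ff c (u k.castSucc) (u j.castSucc) else 1)
      = gg c v (u (Fin.last n)) *
          ((∏ j : Fin n, ff c (u (Fin.last n)) (u j.castSucc))
            - ∏ j : Fin n, ff c v (u j.castSucc)) := by
  have hd' : ∀ i j : Fin n, i ≠ j → u i.castSucc ≠ u j.castSucc := fun i j hij =>
    hdist _ _ (fun h => hij (Fin.castSucc_inj.mp h))
  have hw' : ∀ i : Fin n, u (Fin.last n) ≠ u i.castSucc := fun i =>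
    hdist _ _ (Fin.castSucc_lt_last i).ne'
  have hv' : ∀ i : Fin n, v ≠ u i.castSucc := fun i => (hv _).symm
  have hvw : v ≠ u (Fin.last n) := (hv _).symm
  have Hw : ∏ j : Fin n, ff c (u (Fin.last n)) (u j.castSucc) =
      1 + ∑ k : Fin n, c / (u (Fin.last n) - u k.castSucc) *
        ∏ j : Fin n, (if j ≠ k then ff c (u k.castSucc) (u j.castSucc) else 1) :=
    pf c n (fun i => u i.castSucc) (u (Fin.last n)) hd' hw'
  have Hv : ∏ j : Fin n, ff c v (u j.castSucc) =
      1 + ∑ k : Fin n, c / (v - u k.castSucc) *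
        ∏ j : Fin n, (if j ≠ k then ff c (u k.castSucc) (u j.castSucc) else 1) :=
    pf c n (fun i => u i.castSucc) v hd' hv'
  have hterm : ∀ k ∈ (Finset.univ : Finset (Fin n)),
      gg c (u (Fin.last n)) (u k.castSucc) * gg c v (u k.castSucc) *
          ∏ j : Fin n, (if j ≠ k then ff c (u k.castSucc) (u j.castSucc) else 1)
        = gg c v (u (Fin.last n)) *
            (c / (u (Fin.last n) - u k.castSucc) *
                (∏ j : Fin n, (if j ≠ k then ff c (u k.castSucc) (u j.castSucc) else 1))
              - c / (v - u k.castSucc) *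
                ∏ j : Fin n, (if j ≠ k then ff c (u k.castSucc) (u j.castSucc) else 1)) := by
    intro k _
    have h := key2 c (u (Fin.last n)) v (u k.castSucc) (hw' k) (hv' k) hvw
    linear_combination
      (∏ j : Fin n, (if j ≠ k then ff c (u k.castSucc) (u j.castSucc) else 1)) * h
  rw [Finset.sum_congr rfl hterm, ← Finset.mul_sum, Finset.sum_sub_distrib, Hw, Hv]
  ring

end Bethe
end
end

section
/- Let c ∈ ℂ be nonzero, let n ≥ 0, and let w₁, …, w_n, u, v ∈ ℂ be pairwise distinct. With g(u,v) = c/(u−v) and f(u,v) = (u−v+c)/(u−v), one has: Σ_{i=1}^{n} g(wᵢ,u)·g(v,wᵢ)·∏_{j≠i} f(wⱼ,wᵢ) = g(v,u)·( ∏_{j=1}^{n} f(wⱼ,u) − ∏_{j=1}^{n} f(wⱼ,v) ). -/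
open scoped BigOperators
open MulOpposite

noncomputable section

namespace Bethe

variable {A : Type*} [Ring A] [Algebra ℂ A]

private lemma gg_swap (c x y : ℂ) : gg c x y = -gg c y x := by
  rw [gg, gg, ← neg_sub y x, div_neg]

private lemma ff_eq_one_add (c : ℂ) {x y : ℂ} (h : x ≠ y) :
    ff c x y = 1 + gg c x y := by
  rw [ff, gg, add_div, div_self (sub_ne_zero.mpr h)]

private lemma pf_s17 (c : ℂ) {a b d : ℂ} (hab : a ≠ b) (hbd : b ≠ d) (had : a ≠ d) :
    gg c b d * gg c a b = gg c a d * (gg c b d + gg c a b) := by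
  have h1 : a - b ≠ 0 := sub_ne_zero.mpr hab
  have h2 : b - d ≠ 0 := sub_ne_zero.mpr hbd
  have h3 : a - d ≠ 0 := sub_ne_zero.mpr had
  unfold gg
  field_simp
  ring

private lemma key (c : ℂ) : ∀ (n : ℕ) (w : Fin n → ℂ) (z : ℂ),
    (∀ i j : Fin n, i ≠ j → w i ≠ w j) → (∀ i : Fin n, w i ≠ z) →
    ∑ i : Fin n, gg c (w i) z * ∏ j : Fin n, (if j ≠ i then ff c (w j) (w i) else 1)
      = (∏ j : Fin n, ff c (w j) z) - 1 := by
  intro n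
  induction n with
  | zero => intro w z _ _; simp
  | succ n ih =>
    intro w z hww hwz
    have hww' : ∀ i j : Fin n, i ≠ j → w i.succ ≠ w j.succ := fun i j hij =>
      hww i.succ j.succ (fun h => hij (Fin.succ_injective _ h))
    have hw0 : ∀ i : Fin n, w i.succ ≠ w 0 := fun i =>
      hww i.succ 0 (Fin.succ_ne_zero i)
    have hwz' : ∀ i : Fin n, w i.succ ≠ z := fun i => hwz i.succ
    have hA : ∑ i : Fin n, gg c (w i.succ) z *
        ∏ j : Fin n, (if j ≠ i then ff c (w j.succ) (w i.succ) else 1)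
        = (∏ j : Fin n, ff c (w j.succ) z) - 1 := by
      simpa using ih (fun i => w i.succ) z hww' hwz'
    have hB : ∑ i : Fin n, gg c (w i.succ) (w 0) *
        ∏ j : Fin n, (if j ≠ i then ff c (w j.succ) (w i.succ) else 1)
        = (∏ j : Fin n, ff c (w j.succ) (w 0)) - 1 := by
      simpa using ih (fun i => w i.succ) (w 0) hww' hw0
    have h0 : ∀ x : Fin n, ((0 : Fin (n+1)) = x.succ) = False := fun x =>
      eq_false (Fin.succ_ne_zero x).symm
    rw [Fin.sum_univ_succ, Fin.prod_univ_succ]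
    simp only [Fin.succ_ne_zero, Ne, not_true, not_false_iff, if_true, if_false,
      ite_not, Fin.succ_inj, Fin.prod_univ_succ, h0, one_mul]
    have hstep : ∀ i : Fin n,
        gg c (w i.succ) z * (ff c (w 0) (w i.succ) *
            ∏ j : Fin n, (if j = i then 1 else ff c (w j.succ) (w i.succ)))
          = (1 + gg c (w 0) z) * (gg c (w i.succ) z *
              ∏ j : Fin n, (if j = i then 1 else ff c (w j.succ) (w i.succ)))
            - gg c (w 0) z * (gg c (w i.succ) (w 0) *
              ∏ j : Fin n, (if j = i then 1 else ff c (w j.succ) (w i.succ))) := by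
      intro i
      have h1 : ff c (w 0) (w i.succ) = 1 + gg c (w 0) (w i.succ) :=
        ff_eq_one_add c (hw0 i).symm
      have h2 := pf_s17 c (a := w 0) (b := w i.succ) (d := z) (hw0 i).symm (hwz' i)
        (hwz 0)
      have h3 : gg c (w 0) (w i.succ) = -gg c (w i.succ) (w 0) := gg_swap c _ _
      rw [h1, h3]; rw [h3] at h2
      linear_combination
        (∏ j : Fin n, (if j = i then 1 else ff c (w j.succ) (w i.succ))) * h2
    rw [Finset.sum_congr rfl fun i _ => hstep i, Finset.sum_sub_distrib,
      ← Finset.mul_sum, ← Finset.mul_sum]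
    have hA' : ∑ i : Fin n, gg c (w i.succ) z *
        ∏ j : Fin n, (if j = i then 1 else ff c (w j.succ) (w i.succ))
        = (∏ j : Fin n, ff c (w j.succ) z) - 1 := by
      rw [← hA]; refine Finset.sum_congr rfl fun i _ => ?_
      congr 1; refine Finset.prod_congr rfl fun j _ => ?_
      by_cases h : j = i <;> simp [h]
    have hB' : ∑ i : Fin n, gg c (w i.succ) (w 0) *
        ∏ j : Fin n, (if j = i then 1 else ff c (w j.succ) (w i.succ))
        = (∏ j : Fin n, ff c (w j.succ) (w 0)) - 1 := by
      rw [← hB]; refine Finset.sum_congr rfl fun i _ => ?_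
      congr 1; refine Finset.prod_congr rfl fun j _ => ?_
      by_cases h : j = i <;> simp [h]
    rw [hA', hB', ff_eq_one_add c (hwz 0)]
    ring

/-- summation identity (6.33) of the paper. -/
theorem statement17 (c : ℂ) (hc : c ≠ 0) (n : ℕ) (w : Fin n → ℂ) (u v : ℂ)
    (hww : ∀ i j : Fin n, i ≠ j → w i ≠ w j)
    (hwu : ∀ i : Fin n, w i ≠ u) (hwv : ∀ i : Fin n, w i ≠ v) (huv : u ≠ v) :
    ∑ i : Fin n,
        gg c (w i) u * gg c v (w i) *
          ∏ j : Fin n, (if j ≠ i then ff c (w j) (w i) else 1)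
      = gg c v u * ((∏ j : Fin n, ff c (w j) u) - ∏ j : Fin n, ff c (w j) v) := by
  have hstep : ∀ i : Fin n,
      gg c (w i) u * gg c v (w i) *
          ∏ j : Fin n, (if j ≠ i then ff c (w j) (w i) else 1)
        = gg c v u * (gg c (w i) u *
            ∏ j : Fin n, (if j ≠ i then ff c (w j) (w i) else 1))
          - gg c v u * (gg c (w i) v *
            ∏ j : Fin n, (if j ≠ i then ff c (w j) (w i) else 1)) := by
    intro i
    have h2 := pf_s17 c (a := v) (b := w i) (d := u) (hwv i).symm (hwu i) huv.symm
    have h3 : gg c v (w i) = -gg c (w i) v := gg_swap c _ _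
    rw [h3] at h2 ⊢
    linear_combination (∏ j : Fin n, (if j ≠ i then ff c (w j) (w i) else 1)) * h2
  rw [Finset.sum_congr rfl fun i _ => hstep i, Finset.sum_sub_distrib,
    ← Finset.mul_sum, ← Finset.mul_sum, key c n w u hww hwu, key c n w v hww hwv]
  ring

end Bethe
end
end

section
/- Let c ∈ ℂ be nonzero, let ℓ ≥ 1, and let v₁, …, v_{ℓ−1}, v, u₁, …, u_ℓ ∈ ℂ be such that the full list of these ℓ + ℓ parameters is admissible (pairwise distinct entries with x − y + c ≠ 0 for distinct entries x, y). Then the Izergin kernel satisfies the pole-development recursion: K_ℓ((v₁,…,v_{ℓ−1},v) | (u₁,…,u_ℓ)) = Σ_{i=1}^{ℓ} g(v,uᵢ)·(∏_{j=1}^{ℓ−1} f(vⱼ,uᵢ))·(∏_{k≠i} f(uᵢ,uₖ))·K_{ℓ−1}((v₁,…,v_{ℓ−1}) | (u₁,…,û_i,…,u_ℓ)), where (u₁,…,ûᵢ,…,u_ℓ) denotes the list with uᵢ removed. -/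
open scoped BigOperators
open MulOpposite

noncomputable section

namespace Bethe

variable {A : Type*} [Ring A] [Algebra ℂ A]

open Polynomial Finset

private def binP (c w : ℂ) : ℂ[X] := (Polynomial.X - Polynomial.C w) * (Polynomial.X - Polynomial.C (w - c))

private lemma binP_eval (c w t : ℂ) : (binP c w).eval t = (t - w) * (t - w + c) := by
  simp only [binP, eval_mul, eval_sub, eval_X, eval_C]; ring

private lemma binP_natDegree_le (c w : ℂ) : (binP c w).natDegree ≤ 2 := by
  refine natDegree_mul_le.trans ?_
  simp only [natDegree_X_sub_C]
  norm_num

private def rowP (c : ℂ) {m : ℕ} (us : Fin (m+1) → ℂ) (k : Fin (m+1)) : ℂ[X] :=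
  ∏ j : Fin m, binP c (us (k.succAbove j))

private def NP (c : ℂ) {m : ℕ} (V us : Fin (m+1) → ℂ) :
    Matrix (Fin (m+1)) (Fin (m+1)) ℂ[X] :=
  (Matrix.of fun j k => Polynomial.C (gg c (V j) (us k) / hh c (V j) (us k))).updateRow
    (Fin.last m) (fun k => Polynomial.C (c^2) * rowP c us k)

private def minorM (c : ℂ) {m : ℕ} (vs : Fin m → ℂ) (us : Fin (m+1) → ℂ) (i : Fin (m+1)) : ℂ :=
  Matrix.det (Matrix.of fun j k : Fin m =>
    gg c (vs j) (us (i.succAbove k)) / hh c (vs j) (us (i.succAbove k)))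

private lemma NP_last (c : ℂ) {m : ℕ} (V us : Fin (m+1) → ℂ) :
    NP c V us (Fin.last m) = fun k => C (c^2) * rowP c us k :=
  Matrix.updateRow_self

private lemma NP_castSucc (c : ℂ) {m : ℕ} (V us : Fin (m+1) → ℂ) (j : Fin m) :
    NP c V us j.castSucc = fun k => C (gg c (V j.castSucc) (us k) / hh c (V j.castSucc) (us k)) :=
  Matrix.updateRow_ne (Fin.castSucc_lt_last j).ne

private lemma detNP_eval (c : ℂ) {m : ℕ} (V us : Fin (m+1) → ℂ) (t : ℂ) :
    ((NP c V us).map (eval t)).det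
      = ∑ k : Fin (m+1), (-1)^(m + (k:ℕ)) *
          (c^2 * ∏ j : Fin m, ((t - us (k.succAbove j)) * (t - us (k.succAbove j) + c))) *
          minorM c (fun j => V j.castSucc) us k := by
  rw [Matrix.det_succ_row _ (Fin.last m)]
  refine Finset.sum_congr rfl fun k _ => ?_
  have h1 : ((NP c V us).map (eval t)) (Fin.last m) k
      = c^2 * ∏ j : Fin m, ((t - us (k.succAbove j)) * (t - us (k.succAbove j) + c)) := by
    simp [Matrix.map_apply, NP_last, rowP, eval_prod, binP_eval]
  have h2 : (((NP c V us).map (eval t)).submatrix (Fin.last m).succAbove k.succAbove)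
      = Matrix.of fun j j' : Fin m =>
          gg c (V j.castSucc) (us (k.succAbove j')) / hh c (V j.castSucc) (us (k.succAbove j')) := by
    ext j j'
    simp [Matrix.submatrix_apply, Fin.succAbove_last, Matrix.map_apply, NP_castSucc]
  rw [h1, h2, Fin.val_last]
  rfl

private lemma detNP_natDegree_le (c : ℂ) {m : ℕ} (V us : Fin (m+1) → ℂ) :
    ((NP c V us).det).natDegree ≤ 2 * m := by
  rw [Matrix.det_apply']
  refine natDegree_sum_le_of_forall_le _ _ fun σ _ => ?_
  refine natDegree_mul_le.trans ?_
  have hb : ∀ j k : Fin (m+1), (NP c V us j k).natDegree ≤ if j = Fin.last m then 2*m else 0 := by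
    intro j k
    by_cases hj : j = Fin.last m
    · subst hj
      rw [if_pos rfl, NP_last]
      refine natDegree_mul_le.trans ?_
      have : (rowP c us k).natDegree ≤ 2 * m := by
        refine (natDegree_prod_le _ _).trans ?_
        calc ∑ j : Fin m, (binP c (us (k.succAbove j))).natDegree
            ≤ ∑ _j : Fin m, 2 := Finset.sum_le_sum fun j _ => binP_natDegree_le _ _
          _ = 2 * m := by simp [mul_comm]
      simpa using this
    · obtain ⟨j', rfl⟩ := Fin.exists_castSucc_eq.mpr hj
      rw [if_neg hj, NP_castSucc]
      simp
  calc (((Equiv.Perm.sign σ : ℤ) : ℂ[X])).natDegree + (∏ i, NP c V us (σ i) i).natDegree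
      ≤ 0 + ∑ i, (NP c V us (σ i) i).natDegree := by
        refine add_le_add (by simp) (natDegree_prod_le _ _)
    _ ≤ ∑ i : Fin (m+1), (if σ i = Fin.last m then 2*m else 0) := by
        refine (zero_add _).trans_le (Finset.sum_le_sum fun i _ => hb _ _)
    _ = ∑ j : Fin (m+1), (if j = Fin.last m then 2*m else 0) := Equiv.sum_comp σ (fun j => if j = Fin.last m then 2*m else 0)
    _ = 2 * m := by simp

private lemma prod_ite_ne {m : ℕ} (i : Fin (m+1)) (f : Fin (m+1) → ℂ) :
    (∏ k : Fin (m+1), if k ≠ i then f k else 1) = ∏ j : Fin m, f (i.succAbove j) := by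
  rw [Fin.prod_univ_succAbove (fun k => if k ≠ i then f k else 1) i]
  simp [Fin.succAbove_ne]

private lemma card_filter_lt (m : ℕ) (i : Fin (m+1)) :
    (Finset.univ.filter fun j : Fin m => (j : ℕ) < (i : ℕ)).card = (i : ℕ) := by
  have himg : (Finset.univ.filter fun j : Fin m => (j:ℕ) < (i:ℕ)).image Fin.val
      = Finset.range (i:ℕ) := by
    ext x
    simp only [Finset.mem_image, Finset.mem_filter, Finset.mem_univ, true_and, Finset.mem_range]
    constructor
    · rintro ⟨j, hj, rfl⟩; exact hj
    · intro hx
      exact ⟨⟨x, lt_of_lt_of_le hx (Nat.lt_succ_iff.mp i.isLt)⟩, hx, rfl⟩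
  rw [← Finset.card_image_of_injective _ Fin.val_injective, himg, Finset.card_range]

private lemma succAbove_val_lt {m : ℕ} (i : Fin (m+1)) (j : Fin m) :
    ((i.succAbove j : Fin (m+1)) : ℕ) < (i:ℕ) ↔ (j:ℕ) < (i:ℕ) := by
  rcases lt_or_ge ((j:ℕ)) ((i:ℕ)) with h | h
  · rw [Fin.succAbove_of_castSucc_lt _ _ (by rwa [Fin.lt_def, Fin.coe_castSucc])]
    simp [h]
  · rw [Fin.succAbove_of_le_castSucc _ _ (by rwa [Fin.le_def, Fin.coe_castSucc])]
    simp only [Fin.val_succ, Fin.coe_castSucc]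
    omega

private lemma prod_sign_succAbove (m : ℕ) (i : Fin (m+1)) :
    (∏ j : Fin m, if ((i.succAbove j : Fin (m+1)) : ℕ) < (i:ℕ) then (-1:ℂ) else 1)
      = (-1)^(i:ℕ) := by
  have h : ∀ j : Fin m, (if ((i.succAbove j : Fin (m+1)) : ℕ) < (i:ℕ) then (-1:ℂ) else 1)
      = if (j:ℕ) < (i:ℕ) then (-1:ℂ) else 1 := by
    intro j; exact if_congr (succAbove_val_lt i j) rfl rfl
  rw [Finset.prod_congr rfl fun j _ => h j, Finset.prod_ite, Finset.prod_const,
    Finset.prod_const, one_pow, mul_one, card_filter_lt]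


private def GvP (c : ℂ) {n : ℕ} (w : Fin n → ℂ) : ℂ :=
  ∏ j : Fin n, ∏ k : Fin n, if (k:ℕ) < (j:ℕ) then gg c (w j) (w k) else 1
private def GuP (c : ℂ) {n : ℕ} (w : Fin n → ℂ) : ℂ :=
  ∏ j : Fin n, ∏ k : Fin n, if (k:ℕ) < (j:ℕ) then gg c (w k) (w j) else 1
private def HP (c : ℂ) {n n' : ℕ} (w : Fin n → ℂ) (w' : Fin n' → ℂ) : ℂ :=
  ∏ j : Fin n, ∏ k : Fin n', hh c (w j) (w' k)

private lemma Kiz_eq (c : ℂ) {n : ℕ} (vs us : Fin n → ℂ) :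
    Kiz c vs us = GvP c vs * GuP c us * HP c vs us *
      Matrix.det (Matrix.of fun j k => gg c (vs j) (us k) / hh c (vs j) (us k)) := rfl

private lemma Kiz_succAbove (c : ℂ) {m : ℕ} (vs : Fin m → ℂ) (us : Fin (m+1) → ℂ)
    (i : Fin (m+1)) :
    Kiz c vs (fun k => us (i.succAbove k))
      = GvP c vs * GuP c (fun k => us (i.succAbove k)) * HP c vs (fun k => us (i.succAbove k))
        * minorM c vs us i := rfl

private lemma HP_split (c : ℂ) {m : ℕ} (vs : Fin m → ℂ) (us : Fin (m+1) → ℂ) (i : Fin (m+1)) :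
    HP c vs us = (∏ j : Fin m, hh c (vs j) (us i)) * HP c vs (fun k => us (i.succAbove k)) := by
  unfold HP
  rw [← Finset.prod_mul_distrib]
  exact Finset.prod_congr rfl fun j _ =>
    Fin.prod_univ_succAbove (fun k => hh c (vs j) (us k)) i

private def qq (c : ℂ) {m : ℕ} (us : Fin (m+1) → ℂ) (i : Fin (m+1)) (j : Fin m) : ℂ :=
  (if (i:ℕ) < ((i.succAbove j : Fin (m+1)):ℕ) then gg c (us i) (us (i.succAbove j)) else 1) *
  (if ((i.succAbove j : Fin (m+1)):ℕ) < (i:ℕ) then gg c (us (i.succAbove j)) (us i) else 1)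

private lemma GuP_split (c : ℂ) {m : ℕ} (us : Fin (m+1) → ℂ) (i : Fin (m+1)) :
    GuP c us = (∏ j : Fin m, qq c us i j) * GuP c (fun k => us (i.succAbove k)) := by
  unfold GuP
  have step1 : (∏ j : Fin (m+1), ∏ k : Fin (m+1), if (k:ℕ) < (j:ℕ) then gg c (us k) (us j) else 1)
      = ∏ j : Fin (m+1), ((if (i:ℕ) < (j:ℕ) then gg c (us i) (us j) else 1) *
          ∏ k : Fin m, (if ((i.succAbove k : Fin (m+1)):ℕ) < (j:ℕ) then
            gg c (us (i.succAbove k)) (us j) else 1)) :=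
    Finset.prod_congr rfl fun j _ =>
      Fin.prod_univ_succAbove (fun k => if (k:ℕ) < (j:ℕ) then gg c (us k) (us j) else 1) i
  rw [step1, Finset.prod_mul_distrib,
    Fin.prod_univ_succAbove (fun j => if (i:ℕ) < (j:ℕ) then gg c (us i) (us j) else 1) i,
    Fin.prod_univ_succAbove (fun j => ∏ k : Fin m, if ((i.succAbove k : Fin (m+1)):ℕ) < (j:ℕ)
      then gg c (us (i.succAbove k)) (us j) else 1) i]
  have hC : (∏ j : Fin m, ∏ k : Fin m,
        if ((i.succAbove k : Fin (m+1)):ℕ) < ((i.succAbove j : Fin (m+1)):ℕ) then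
          gg c (us (i.succAbove k)) (us (i.succAbove j)) else 1)
      = ∏ j : Fin m, ∏ k : Fin m, if (k:ℕ) < (j:ℕ) then
          gg c (us (i.succAbove k)) (us (i.succAbove j)) else 1 := by
    refine Finset.prod_congr rfl fun j _ => Finset.prod_congr rfl fun k _ => ?_
    refine if_congr ?_ rfl rfl
    rw [← Fin.lt_def, ← Fin.lt_def, Fin.succAbove_lt_succAbove_iff]
  rw [hC]
  unfold qq
  rw [Finset.prod_mul_distrib]
  simp only [lt_irrefl, if_false]
  ring

private lemma GvP_snoc (c : ℂ) {m : ℕ} (vs : Fin m → ℂ) (v : ℂ) (V : Fin (m+1) → ℂ)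
    (hVl : V (Fin.last m) = v) (hVc : ∀ j : Fin m, V j.castSucc = vs j) :
    GvP c V = (∏ k : Fin m, gg c v (vs k)) * GvP c vs := by
  unfold GvP
  rw [Fin.prod_univ_succAbove (fun j : Fin (m+1) => ∏ k : Fin (m+1),
    if (k:ℕ) < (j:ℕ) then gg c (V j) (V k) else 1) (Fin.last m)]
  have h1 : (∏ k : Fin (m+1), if (k:ℕ) < ((Fin.last m : Fin (m+1)):ℕ) then
      gg c (V (Fin.last m)) (V k) else 1) = ∏ k : Fin m, gg c v (vs k) := by
    rw [Fin.prod_univ_succAbove (fun k : Fin (m+1) => if (k:ℕ) < ((Fin.last m : Fin (m+1)):ℕ) then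
      gg c (V (Fin.last m)) (V k) else 1) (Fin.last m)]
    simp [hVl, hVc, Fin.succAbove_last, Fin.is_lt]
  have h2 : ∀ j : Fin m, (∏ k : Fin (m+1),
      if (k:ℕ) < (((Fin.last m).succAbove j : Fin (m+1)):ℕ) then
        gg c (V ((Fin.last m).succAbove j)) (V k) else 1)
      = ∏ k : Fin m, if (k:ℕ) < (j:ℕ) then gg c (vs j) (vs k) else 1 := by
    intro j
    rw [Fin.succAbove_last_apply, Fin.prod_univ_succAbove (fun k : Fin (m+1) =>
      if (k:ℕ) < ((Fin.castSucc j : Fin (m+1)):ℕ) then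
        gg c (V (Fin.castSucc j)) (V k) else 1) (Fin.last m)]
    simp [hVl, hVc, Fin.succAbove_last,
      show ¬ ((m:ℕ) < (j:ℕ)) from by omega]
  rw [h1]
  exact congrArg _ (Finset.prod_congr rfl fun j _ => h2 j)

private lemma HP_snoc (c : ℂ) {m n' : ℕ} (vs : Fin m → ℂ) (v : ℂ) (us : Fin n' → ℂ)
    (V : Fin (m+1) → ℂ)
    (hVl : V (Fin.last m) = v) (hVc : ∀ j : Fin m, V j.castSucc = vs j) :
    HP c V us = HP c vs us * ∏ k : Fin n', hh c v (us k) := by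
  unfold HP
  rw [Fin.prod_univ_succAbove (fun j : Fin (m+1) => ∏ k : Fin n',
    hh c (V j) (us k)) (Fin.last m)]
  simp only [hVl, Fin.succAbove_last, hVc]
  exact mul_comm _ _

private lemma detD_snoc (c : ℂ) {m : ℕ} (vs : Fin m → ℂ) (v : ℂ) (us : Fin (m+1) → ℂ)
    (V : Fin (m+1) → ℂ)
    (hVl : V (Fin.last m) = v) (hVc : ∀ j : Fin m, V j.castSucc = vs j) :
    Matrix.det (Matrix.of fun j k => gg c (V j) (us k) / hh c (V j) (us k))
      = ∑ k : Fin (m+1), (-1)^(m + (k:ℕ)) * (gg c v (us k) / hh c v (us k)) * minorM c vs us k := by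
  rw [Matrix.det_succ_row _ (Fin.last m)]
  refine Finset.sum_congr rfl fun k _ => ?_
  rw [Fin.val_last]
  congr 1
  · simp [hVl]
  · unfold minorM
    congr 1
    ext j j'
    simp [Matrix.submatrix_apply, Fin.succAbove_last, hVc]


private lemma CmulDet_eval (K0 x : ℂ) {m : ℕ} (c : ℂ) (V us : Fin (m+1) → ℂ) :
    (Polynomial.C K0 * (NP c V us).det).eval x
      = K0 * ((NP c V us).map (Polynomial.eval x)).det := by
  rw [eval_mul, eval_C]
  congr 1
  rw [← Polynomial.coe_evalRingHom, RingHom.map_det, RingHom.mapMatrix_apply]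

private lemma claim2 (c : ℂ) (hc : c ≠ 0) {m : ℕ} (vs : Fin m → ℂ) (us : Fin (m+1) → ℂ)
    (V : Fin (m+1) → ℂ) (hVc : ∀ j : Fin m, V j.castSucc = vs j) (t : Fin m)
    (h1 : ∀ k', vs t - us k' ≠ 0) (h2 : ∀ k', vs t - us k' + c ≠ 0) :
    ((NP c V us).map (Polynomial.eval (vs t))).det = 0 := by
  set M := (NP c V us).map (Polynomial.eval (vs t)) with hM
  set Λ : ℂ := ∏ k' : Fin (m+1), ((vs t - us k') * (vs t - us k' + c)) with hΛ
  have hrow : M (Fin.last m) = Λ • M (Fin.castSucc t) := by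
    funext k
    have hL : M (Fin.last m) k
        = c^2 * ∏ j : Fin m, ((vs t - us (k.succAbove j)) * (vs t - us (k.succAbove j) + c)) := by
      simp [hM, Matrix.map_apply, NP_last, rowP, eval_prod, binP_eval]
    have hR : M (Fin.castSucc t) k = gg c (vs t) (us k) / hh c (vs t) (us k) := by
      simp [hM, Matrix.map_apply, NP_castSucc, hVc]
    rw [hL, Pi.smul_apply, smul_eq_mul, hR, hΛ,
      Fin.prod_univ_succAbove (fun k' => ((vs t - us k') * (vs t - us k' + c))) k]
    have key : gg c (vs t) (us k) / hh c (vs t) (us k)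
        = c^2 / ((vs t - us k) * (vs t - us k + c)) := by
      unfold gg hh
      field_simp
    rw [key]
    linear_combination (-(c^2 * ∏ j : Fin m,
      (vs t - us (k.succAbove j)) * (vs t - us (k.succAbove j) + c))) *
      (mul_inv_cancel₀ (mul_ne_zero (h1 k) (h2 k)))
  have h3 : M.det = (M.updateRow (Fin.last m) (Λ • M (Fin.castSucc t))).det := by
    rw [← hrow, Matrix.updateRow_eq_self]
  have hne : Fin.castSucc t ≠ Fin.last m := (Fin.castSucc_lt_last t).ne
  have h4 : (M.updateRow (Fin.last m) (M (Fin.castSucc t))).det = 0 := by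
    refine Matrix.det_zero_of_row_eq hne ?_
    rw [Matrix.updateRow_ne hne, Matrix.updateRow_self]
  rw [h3, Matrix.det_updateRow_smul, h4, mul_zero]

private lemma claim1core (c : ℂ) (hc : c ≠ 0) {m : ℕ} (vs : Fin m → ℂ) (v : ℂ)
    (us : Fin (m+1) → ℂ) (k : Fin (m+1))
    (hvvs : ∀ t, v - vs t ≠ 0) (hvus : ∀ k', v - us k' ≠ 0)
    (hvusc : ∀ k', v - us k' + c ≠ 0) :
    (∏ t : Fin m, gg c v (vs t)) * (∏ k' : Fin (m+1), hh c v (us k')) *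
        (gg c v (us k) / hh c v (us k)) * (∏ t : Fin m, (v - vs t)) *
        (∏ k' : Fin (m+1), (v - us k')) * c
      = c^2 * ∏ j : Fin m, ((v - us (k.succAbove j)) * (v - us (k.succAbove j) + c)) := by
  have hA : (∏ t : Fin m, gg c v (vs t)) * (∏ t : Fin m, (v - vs t)) = c ^ m := by
    rw [← Finset.prod_mul_distrib]
    unfold gg
    rw [Finset.prod_congr rfl fun t _ => div_mul_cancel₀ c (hvvs t)]
    simp
  have hB : (∏ j : Fin m, hh c v (us (k.succAbove j))) *
        (∏ j : Fin m, (v - us (k.succAbove j))) * c^m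
      = ∏ j : Fin m, ((v - us (k.succAbove j)) * (v - us (k.succAbove j) + c)) := by
    rw [show (c:ℂ)^m = ∏ _j : Fin m, c from by simp, ← Finset.prod_mul_distrib,
      ← Finset.prod_mul_distrib]
    refine Finset.prod_congr rfl fun j _ => ?_
    unfold hh
    field_simp
  have hC : hh c v (us k) * (gg c v (us k) / hh c v (us k)) * (v - us k) = c := by
    unfold gg hh
    field_simp
    exact div_self (mul_ne_zero (hvus k) (hvusc k))
  rw [Fin.prod_univ_succAbove (fun k' => hh c v (us k')) k,
    Fin.prod_univ_succAbove (fun k' => (v - us k')) k]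
  linear_combination
    (hh c v (us k) * (gg c v (us k) / hh c v (us k)) * (v - us k) *
      (∏ j : Fin m, hh c v (us (k.succAbove j))) * (∏ j : Fin m, (v - us (k.succAbove j))) * c) * hA
    + ((∏ j : Fin m, hh c v (us (k.succAbove j))) * (∏ j : Fin m, (v - us (k.succAbove j))) * c * c^m) * hC
    + (c^2) * hB

private lemma claim1 (c : ℂ) (hc : c ≠ 0) {m : ℕ} (vs : Fin m → ℂ) (v : ℂ)
    (us : Fin (m+1) → ℂ) (V : Fin (m+1) → ℂ)
    (hVl : V (Fin.last m) = v) (hVc : ∀ j : Fin m, V j.castSucc = vs j)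
    (hvvs : ∀ t, v - vs t ≠ 0) (hvus : ∀ k', v - us k' ≠ 0)
    (hvusc : ∀ k', v - us k' + c ≠ 0) :
    (Polynomial.C (GvP c vs * GuP c us * HP c vs us) * (NP c V us).det).eval v
      = c * (Kiz c V us * (∏ t : Fin m, (v - vs t)) * (∏ k : Fin (m+1), (v - us k))) := by
  rw [CmulDet_eval, detNP_eval, show (fun j : Fin m => V j.castSucc) = vs from funext hVc,
    Kiz_eq, detD_snoc c vs v us V hVl hVc, GvP_snoc c vs v V hVl hVc, HP_snoc c vs v us V hVl hVc]
  rw [Finset.mul_sum]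
  conv_rhs => rw [Finset.mul_sum, Finset.sum_mul, Finset.sum_mul, Finset.mul_sum]
  refine Finset.sum_congr rfl fun k _ => ?_
  have hcore := claim1core c hc vs v us k hvvs hvus hvusc
  linear_combination (-((-1:ℂ)^(m+(k:ℕ)) * minorM c vs us k * GvP c vs * GuP c us *
    HP c vs us)) * hcore

private lemma claim7 (c : ℂ) (hc : c ≠ 0) {m : ℕ} (vs : Fin m → ℂ) (us : Fin (m+1) → ℂ)
    (i : Fin (m+1))
    (hvu : ∀ j : Fin m, vs j - us i ≠ 0)
    (huw : ∀ j : Fin m, us i - us (i.succAbove j) ≠ 0) :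
    GvP c vs * GuP c us * HP c vs us *
        ((-1)^(m+(i:ℕ)) * (c^2 * ∏ j : Fin m,
          ((us i - us (i.succAbove j)) * (us i - us (i.succAbove j) + c))))
      = c * ((∏ k : Fin m, (us i - vs k)) *
          ((c * (∏ j : Fin m, ff c (vs j) (us i)) *
            (∏ j : Fin m, ff c (us i) (us (i.succAbove j))) *
            (GvP c vs * GuP c (fun k => us (i.succAbove k)) *
              HP c vs (fun k => us (i.succAbove k)))) *
          ∏ j : Fin m, (us i - us (i.succAbove j)))) := by
  have key : ∀ j : Fin m,
      (us i - vs j) * ff c (vs j) (us i) * ff c (us i) (us (i.succAbove j)) *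
        (us i - us (i.succAbove j))
      = ((if ((i.succAbove j : Fin (m+1)):ℕ) < (i:ℕ) then (-1:ℂ) else 1) * (-1)) *
        (qq c us i j * hh c (vs j) (us i) *
          ((us i - us (i.succAbove j)) * (us i - us (i.succAbove j) + c))) := by
    intro j
    have hne := huw j
    have hne' : us (i.succAbove j) - us i ≠ 0 := fun h => hne (by
      rw [sub_eq_zero] at h ⊢; exact h.symm)
    have hvu' := hvu j
    rcases Nat.lt_trichotomy ((i.succAbove j : Fin (m+1)):ℕ) ((i:ℕ)) with h|h|h
    · rw [if_pos h]
      unfold qq ff hh gg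
      rw [if_neg (by omega), if_pos h]
      field_simp
      ring
    · exact absurd (Fin.val_injective h) (Fin.succAbove_ne i j)
    · rw [if_neg (by omega)]
      unfold qq ff hh gg
      rw [if_pos h, if_neg (by omega)]
      field_simp
      ring
  have hsign : (∏ j : Fin m,
      ((if ((i.succAbove j : Fin (m+1)):ℕ) < (i:ℕ) then (-1:ℂ) else 1) * (-1)))
      = (-1:ℂ)^(m+(i:ℕ)) := by
    rw [Finset.prod_mul_distrib, prod_sign_succAbove, Finset.prod_const]
    simp [pow_add, mul_comm]
  have h6 : (∏ k : Fin m, (us i - vs k)) * (∏ j : Fin m, ff c (vs j) (us i)) *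
      (∏ j : Fin m, ff c (us i) (us (i.succAbove j))) *
      (∏ j : Fin m, (us i - us (i.succAbove j)))
      = (-1:ℂ)^(m+(i:ℕ)) * ((∏ j : Fin m, qq c us i j) *
          (∏ j : Fin m, hh c (vs j) (us i)) *
          (∏ j : Fin m, ((us i - us (i.succAbove j)) * (us i - us (i.succAbove j) + c)))) := by
    rw [← Finset.prod_mul_distrib, ← Finset.prod_mul_distrib, ← Finset.prod_mul_distrib,
      Finset.prod_congr rfl fun j _ => key j, Finset.prod_mul_distrib, hsign,
      Finset.prod_mul_distrib, Finset.prod_mul_distrib]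
  rw [GuP_split c us i, HP_split c vs us i]
  linear_combination (-(c^2 * GvP c vs * GuP c (fun k => us (i.succAbove k)) *
    HP c vs (fun k => us (i.succAbove k)))) * h6


/-- pole-development recursion of the Izergin kernel. -/
theorem statement19 (c : ℂ) (hc : c ≠ 0) (m : ℕ)
    (vs : Fin m → ℂ) (v : ℂ) (us : Fin (m + 1) → ℂ)
    (hadm : Admissible c (List.ofFn (Fin.snoc vs v : Fin (m + 1) → ℂ) ++ List.ofFn us)) :
    Kiz c (Fin.snoc vs v : Fin (m + 1) → ℂ) us
      = ∑ i : Fin (m + 1),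
          gg c v (us i) * (∏ j : Fin m, ff c (vs j) (us i)) *
            (∏ k : Fin (m + 1), if k ≠ i then ff c (us i) (us k) else 1) *
            Kiz c vs (fun k => us (i.succAbove k)) := by
  classical
  set V : Fin (m+1) → ℂ := (Fin.snoc vs v : Fin (m+1) → ℂ) with hV
  have hVl : V (Fin.last m) = v := by simp [hV]
  have hVc : ∀ j : Fin m, V j.castSucc = vs j := fun j => by simp [hV]
  rw [Admissible, List.pairwise_append] at hadm
  obtain ⟨h1, h2, h3⟩ := hadm
  rw [List.pairwise_ofFn] at h1 h2
  have hcross : ∀ a b, (V a ≠ us b ∧ V a - us b + c ≠ 0 ∧ us b - V a + c ≠ 0) :=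
    fun a b => h3 _ (List.mem_ofFn.mpr ⟨a, rfl⟩) _ (List.mem_ofFn.mpr ⟨b, rfl⟩)
  have hVV : ∀ a b : Fin (m+1), a ≠ b → V a ≠ V b := by
    intro a b hab
    rcases lt_or_gt_of_ne hab with h|h
    · exact (h1 h).1
    · exact fun e => (h1 h).1 e.symm
  have hUU : ∀ a b : Fin (m+1), a ≠ b → us a ≠ us b := by
    intro a b hab
    rcases lt_or_gt_of_ne hab with h|h
    · exact (h2 h).1
    · exact fun e => (h2 h).1 e.symm
  have hvus : ∀ k, v - us k ≠ 0 := fun k => sub_ne_zero.mpr (hVl ▸ (hcross (Fin.last m) k).1)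
  have hvusc : ∀ k, v - us k + c ≠ 0 := fun k => hVl ▸ (hcross (Fin.last m) k).2.1
  have hvsus : ∀ (t : Fin m) (k : Fin (m+1)), vs t - us k ≠ 0 :=
    fun t k => sub_ne_zero.mpr ((hVc t) ▸ (hcross t.castSucc k).1)
  have hvsusc : ∀ (t : Fin m) (k : Fin (m+1)), vs t - us k + c ≠ 0 :=
    fun t k => (hVc t) ▸ (hcross t.castSucc k).2.1
  have hvvs : ∀ t, v - vs t ≠ 0 := by
    intro t
    refine sub_ne_zero.mpr ?_
    rw [← hVl, ← hVc t]
    exact hVV _ _ (Fin.castSucc_lt_last t).ne'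
  have huwne : ∀ (i : Fin (m+1)) (j : Fin m), us i - us (i.succAbove j) ≠ 0 :=
    fun i j => sub_ne_zero.mpr (hUU _ _ (Fin.ne_succAbove i j))
  have hvsinj : Function.Injective vs := by
    intro a b e
    by_contra hab
    exact hVV a.castSucc b.castSucc
      (fun h => hab (Fin.castSucc_injective _ h)) (by rw [hVc, hVc]; exact e)
  have husinj : Function.Injective us := by
    intro a b e
    by_contra hab
    exact hUU a b hab e
  set K0 : ℂ := GvP c vs * GuP c us * HP c vs us with hK0
  set P : Polynomial ℂ := Polynomial.C K0 * (NP c V us).det with hP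
  set a : Fin (m+1) → ℂ := fun i =>
    c * (∏ j : Fin m, ff c (vs j) (us i)) *
      (∏ k : Fin (m+1), if k ≠ i then ff c (us i) (us k) else 1) *
      Kiz c vs (fun k => us (i.succAbove k)) with ha
  set R : Polynomial ℂ := Polynomial.C c *
    ((∏ k : Fin m, (Polynomial.X - Polynomial.C (vs k))) *
      ∑ i : Fin (m+1), Polynomial.C (a i) *
        ∏ j : Fin m, (Polynomial.X - Polynomial.C (us (i.succAbove j)))) with hR
  -- degree bounds
  have hdegP : P.natDegree ≤ 2*m := by
    calc P.natDegree ≤ (Polynomial.C K0).natDegree + ((NP c V us).det).natDegree := by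
          rw [hP]; exact natDegree_mul_le
      _ ≤ 0 + 2*m := add_le_add (le_of_eq (natDegree_C _)) (detNP_natDegree_le c V us)
      _ = 2*m := zero_add _
  have hdegR : R.natDegree ≤ 2*m := by
    have hprod : (∏ k : Fin m, (Polynomial.X - Polynomial.C (vs k))).natDegree ≤ m :=
      (natDegree_prod_le _ _).trans (by simp [natDegree_X_sub_C])
    have hsum : (∑ i : Fin (m+1), Polynomial.C (a i) *
        ∏ j : Fin m, (Polynomial.X - Polynomial.C (us (i.succAbove j)))).natDegree ≤ m := by
      refine natDegree_sum_le_of_forall_le _ _ fun i _ => ?_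
      refine natDegree_mul_le.trans ?_
      have : (∏ j : Fin m, (Polynomial.X - Polynomial.C (us (i.succAbove j)))).natDegree ≤ m :=
        (natDegree_prod_le _ _).trans (by simp [natDegree_X_sub_C])
      simpa [natDegree_C] using this
    calc R.natDegree ≤ (Polynomial.C c).natDegree +
          ((∏ k : Fin m, (Polynomial.X - Polynomial.C (vs k))) *
            ∑ i : Fin (m+1), Polynomial.C (a i) *
              ∏ j : Fin m, (Polynomial.X - Polynomial.C (us (i.succAbove j)))).natDegree := by
          rw [hR]; exact natDegree_mul_le
      _ ≤ 0 + ((∏ k : Fin m, (Polynomial.X - Polynomial.C (vs k))).natDegree +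
          (∑ i : Fin (m+1), Polynomial.C (a i) *
            ∏ j : Fin m, (Polynomial.X - Polynomial.C (us (i.succAbove j)))).natDegree) :=
          add_le_add (le_of_eq (natDegree_C _)) natDegree_mul_le
      _ ≤ 0 + (m + m) := by
          exact add_le_add (le_refl 0) (add_le_add hprod hsum)
      _ ≤ 2*m := by omega
  -- the interpolation points
  set s : Finset ℂ := (Finset.univ.image vs) ∪ (Finset.univ.image us) with hs
  have hcard : s.card = 2*m + 1 := by
    have hd : Disjoint (Finset.univ.image vs) (Finset.univ.image us) := by
      rw [Finset.disjoint_left]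
      rintro x hx hx2
      obtain ⟨t, _, rfl⟩ := Finset.mem_image.mp hx
      obtain ⟨k, _, hk⟩ := Finset.mem_image.mp hx2
      exact hvsus t k (sub_eq_zero.mpr hk.symm)
    rw [hs, Finset.card_union_of_disjoint hd, Finset.card_image_of_injective _ hvsinj,
      Finset.card_image_of_injective _ husinj]
    simp
    omega
  -- P = R
  have hPR : P = R := by
    have hze : P - R = 0 := by
      refine Polynomial.eq_zero_of_natDegree_lt_card_of_eval_eq_zero' _ s ?_ ?_
      · intro x hx
        rw [Polynomial.eval_sub, sub_eq_zero]
        rw [hs] at hx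
        rcases Finset.mem_union.mp hx with hx|hx
        · obtain ⟨t, _, rfl⟩ := Finset.mem_image.mp hx
          have hPv : P.eval (vs t) = 0 := by
            rw [hP, CmulDet_eval, claim2 c hc vs us V hVc t (hvsus t) (hvsusc t), mul_zero]
          have hRv : R.eval (vs t) = 0 := by
            rw [hR]
            simp only [eval_mul, eval_C, eval_prod, eval_sub, eval_X]
            rw [Finset.prod_eq_zero (Finset.mem_univ t) (by simp)]
            ring
          rw [hPv, hRv]
        · obtain ⟨t, _, rfl⟩ := Finset.mem_image.mp hx
          have hPu : P.eval (us t) = K0 * ((-1)^(m+(t:ℕ)) *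
              (c^2 * ∏ j : Fin m, ((us t - us (t.succAbove j)) *
                (us t - us (t.succAbove j) + c))) * minorM c vs us t) := by
            rw [hP, CmulDet_eval, detNP_eval,
              show (fun j : Fin m => V j.castSucc) = vs from funext hVc]
            congr 1
            rw [Finset.sum_eq_single t]
            · intro b _ hbt
              obtain ⟨j0, hj0⟩ := Fin.exists_succAbove_eq (show t ≠ b from fun e => hbt e.symm)
              rw [Finset.prod_eq_zero (Finset.mem_univ j0) (by rw [hj0]; simp)]
              ring
            · intro h; exact absurd (Finset.mem_univ t) h
          have hRu : R.eval (us t) = c * ((∏ k : Fin m, (us t - vs k)) *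
              (a t * ∏ j : Fin m, (us t - us (t.succAbove j)))) := by
            rw [hR]
            simp only [eval_mul, eval_C, eval_prod, eval_finset_sum, eval_sub, eval_X]
            congr 1
            rw [Finset.sum_eq_single t]
            · intro b _ hbt
              obtain ⟨j0, hj0⟩ := Fin.exists_succAbove_eq (show t ≠ b from fun e => hbt e.symm)
              rw [Finset.prod_eq_zero (Finset.mem_univ j0) (by rw [hj0]; simp)]
              ring
            · intro h; exact absurd (Finset.mem_univ t) h
          rw [hPu, hRu, hK0]
          simp only [ha]
          have h7 := claim7 c hc vs us t (fun j => hvsus j t) (huwne t)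
          rw [prod_ite_ne t (fun k => ff c (us t) (us k)), Kiz_succAbove c vs us t]
          linear_combination (minorM c vs us t) * h7
      · rw [hcard]
        have := Polynomial.natDegree_sub_le P R
        omega
    have := sub_eq_zero.mp hze
    exact this
  -- evaluate at v
  have h1v : P.eval v = c * (Kiz c V us * (∏ t : Fin m, (v - vs t)) *
      (∏ k : Fin (m+1), (v - us k))) := by
    rw [hP, hK0]
    exact claim1 c hc vs v us V hVl hVc hvvs hvus hvusc
  have h2v : R.eval v = c * ((∑ i : Fin (m+1),
      gg c v (us i) * (∏ j : Fin m, ff c (vs j) (us i)) *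
        (∏ k : Fin (m+1), if k ≠ i then ff c (us i) (us k) else 1) *
        Kiz c vs (fun k => us (i.succAbove k))) *
      (∏ t : Fin m, (v - vs t)) * (∏ k : Fin (m+1), (v - us k))) := by
    rw [hR]
    simp only [eval_mul, eval_C, eval_prod, eval_finset_sum, eval_sub, eval_X]
    congr 1
    rw [Finset.mul_sum]
    conv_rhs => rw [Finset.sum_mul, Finset.sum_mul]
    refine Finset.sum_congr rfl fun i _ => ?_
    rw [ha, Fin.prod_univ_succAbove (fun k => (v - us k)) i]
    have hgv : gg c v (us i) * (v - us i) = c := by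
      unfold gg; exact div_mul_cancel₀ c (hvus i)
    linear_combination (-((∏ t : Fin m, (v - vs t)) * (∏ j : Fin m, ff c (vs j) (us i)) *
      (∏ k : Fin (m+1), if k ≠ i then ff c (us i) (us k) else 1) *
      Kiz c vs (fun k => us (i.succAbove k)) *
      (∏ j : Fin m, (v - us (i.succAbove j))))) * hgv
  have hPi1 : (∏ t : Fin m, (v - vs t)) ≠ 0 :=
    Finset.prod_ne_zero_iff.mpr fun t _ => hvvs t
  have hPi2 : (∏ k : Fin (m+1), (v - us k)) ≠ 0 :=
    Finset.prod_ne_zero_iff.mpr fun k _ => hvus k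
  have hfin : Kiz c V us * (∏ t : Fin m, (v - vs t)) * (∏ k : Fin (m+1), (v - us k))
      = (∑ i : Fin (m+1),
          gg c v (us i) * (∏ j : Fin m, ff c (vs j) (us i)) *
            (∏ k : Fin (m+1), if k ≠ i then ff c (us i) (us k) else 1) *
            Kiz c vs (fun k => us (i.succAbove k))) *
        (∏ t : Fin m, (v - vs t)) * (∏ k : Fin (m+1), (v - us k)) := by
    refine mul_left_cancel₀ hc ?_
    rw [← h1v, ← h2v, hPR]
  exact mul_right_cancel₀ hPi1 (mul_right_cancel₀ hPi2 hfin)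

end Bethe
end
end
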